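/- Let ψ : ℝᵐ → ℝ ∪ {+∞} be proper lsc convex with compact minimizer set Y⋆ and optimal value ψ⋆, and suppose ψ(y) − ψ⋆ ≥ μ·d(y, Y⋆)^ν on a δ-neighborhood of Y⋆, with μ > 0, ν > 1. Let p > ν − 1, λ > 0, φ = (1/(p+1))‖·‖^{p+1}, and y^{k+1} = argmin_y {ψ(y) + λ^{−p}φ(y − y^k)}. Then, for k sufficiently large, d(y^{k+1}, Y⋆) ≤ (1/(λμ^{1/p}))^{p/(ν−1)} · d(y^k, Y⋆)^{p/(ν−1)}. -/

import Mathlib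

set_option maxHeartbeats 1000000

open Set Filter Metric

open scoped RealInnerProductSpace Topology

lemma my_rpow_sub_rpow_le {a b q : ℝ} (hb : 0 ≤ b) (hba : b ≤ a) (hq : 1 ≤ q) :
    a ^ q - b ^ q ≤ q * a ^ (q - 1) * (a - b) := by
  rcases eq_or_lt_of_le hba with rfl | hlt
  · simp
  · have hf : ∀ x : ℝ, HasDerivAt (fun x => x ^ q) (q * x ^ (q - 1)) x := fun x =>
      Real.hasDerivAt_rpow_const (Or.inr hq)
    obtain ⟨ξ, hξ, hderiv⟩ :=
      exists_hasDerivAt_eq_slope (fun x => x ^ q) (fun x => q * x ^ (q - 1)) hlt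
        (fun x _ => (hf x).continuousAt.continuousWithinAt) (fun x _ => hf x)
    have hξ0 : 0 ≤ ξ := le_of_lt (lt_of_le_of_lt hb hξ.1)
    have heq : a ^ q - b ^ q = q * ξ ^ (q - 1) * (a - b) := by
      rw [hderiv, div_mul_cancel₀ _ (sub_ne_zero.mpr hlt.ne')]
    rw [heq]
    have h1 : ξ ^ (q - 1) ≤ a ^ (q - 1) :=
      Real.rpow_le_rpow hξ0 hξ.2.le (by linarith)
    have hq0 : (0:ℝ) ≤ q := by linarith
    have hab : (0:ℝ) ≤ a - b := by linarith
    have := mul_le_mul_of_nonneg_right (mul_le_mul_of_nonneg_left h1 hq0) hab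
    linarith

/-- Local superlinear convergence of the exact power proximal point method: if `ψ` is
proper lsc convex with compact minimizer set `Y⋆`, satisfies the growth condition
`ψ(y) − ψ⋆ ≥ μ d(y, Y⋆)^ν` on a `δ`-neighborhood of `Y⋆` with `ν > 1`, and
`p > ν − 1`, then for `k` sufficiently large,
`d(y^{k+1}, Y⋆) ≤ (1/(λμ^{1/p}))^{p/(ν−1)} d(y^k, Y⋆)^{p/(ν−1)}`. -/
theorem stmt10 (m : ℕ) (ψ : EuclideanSpace ℝ (Fin m) → ℝ)
    (hψconv : ConvexOn ℝ Set.univ ψ) (hψlsc : LowerSemicontinuous ψ)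
    (Ystar : Set (EuclideanSpace ℝ (Fin m)))
    (hYstar : Ystar = {y | ∀ z, ψ y ≤ ψ z})
    (hne : Ystar.Nonempty) (hcpt : IsCompact Ystar)
    (ψstar : ℝ) (hψstar : ∀ y ∈ Ystar, ψ y = ψstar)
    (μ ν δ lam p : ℝ) (hμ : 0 < μ) (hν : 1 < ν) (hδ : 0 < δ)
    (hlam : 0 < lam) (hp : ν - 1 < p) (hp1 : 1 ≤ p)
    (hgrowth : ∀ y, Metric.infDist y Ystar < δ →
        ψ y - ψstar ≥ μ * (Metric.infDist y Ystar) ^ ν)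
    (y : ℕ → EuclideanSpace ℝ (Fin m))
    (hupd : ∀ k, ∀ z, ψ (y (k + 1)) + lam ^ (-p) * ((1 / (p + 1)) * ‖y (k + 1) - y k‖ ^ (p + 1))
        ≤ ψ z + lam ^ (-p) * ((1 / (p + 1)) * ‖z - y k‖ ^ (p + 1))) :
    ∃ K : ℕ, ∀ k ≥ K,
      Metric.infDist (y (k + 1)) Ystar ≤
        (1 / (lam * μ ^ (1 / p))) ^ (p / (ν - 1)) *
          (Metric.infDist (y k) Ystar) ^ (p / (ν - 1)) := by
  classical
  have hppos : (0:ℝ) < p := lt_of_lt_of_le one_pos hp1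
  have hν1 : (0:ℝ) < ν - 1 := by linarith
  have hp1pos : (0:ℝ) < p + 1 := by linarith
  set c : ℝ := lam ^ (-p) with hc
  have hcpos : 0 < c := Real.rpow_pos_of_pos hlam _
  have hψcont : Continuous ψ := hψconv.locallyLipschitz.continuous
  obtain ⟨η₀, hη₀⟩ := hne
  have hmin : ∀ z, ψstar ≤ ψ z := by
    intro z
    have h1 : ∀ z, ψ η₀ ≤ ψ z := by rw [hYstar] at hη₀; exact hη₀
    have h2 : ψ η₀ = ψstar := hψstar η₀ hη₀
    rw [← h2]; exact h1 z
  have hmem : ∀ x, ψ x ≤ ψstar → x ∈ Ystar := by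
    intro x hx
    rw [hYstar]
    intro z
    exact le_trans hx (hmin z)
  set d : ℕ → ℝ := fun k => Metric.infDist (y k) Ystar with hd
  have hdnn : ∀ k, 0 ≤ d k := fun k => Metric.infDist_nonneg
  have proj : ∀ x : EuclideanSpace ℝ (Fin m),
      ∃ η ∈ Ystar, Metric.infDist x Ystar = dist x η :=
    fun x => hcpt.exists_infDist_eq_dist ⟨η₀, hη₀⟩ x
  -- core variational inequality
  have key1 : ∀ k, ∀ η ∈ Ystar, ∀ t : ℝ, 0 < t → t ≤ 1 →
      t * (ψ (y (k + 1)) - ψstar) + c * ((1 / (p + 1)) * ‖y (k + 1) - y k‖ ^ (p + 1))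
        ≤ c * ((1 / (p + 1)) * ‖(y (k + 1) - y k) + t • (η - y (k + 1))‖ ^ (p + 1)) := by
    intro k η hη t ht0 ht1
    set a := y (k + 1) with ha
    have h1 := hupd k ((1 - t) • a + t • η)
    have hz1 : ((1 - t) • a + t • η) - y k = (a - y k) + t • (η - a) := by
      rw [smul_sub, sub_smul, one_smul]; abel
    rw [hz1] at h1
    have h2 : ψ ((1 - t) • a + t • η) ≤ (1 - t) * ψ a + t * ψ η :=
      hψconv.2 (Set.mem_univ a) (Set.mem_univ η) (by linarith) ht0.le (by ring)
    rw [hψstar η hη] at h2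
    linarith
  -- norm comparison
  have normle : ∀ k, ∀ η ∈ Ystar, ∀ t : ℝ, 0 < t → t ≤ 1 →
      ‖y (k + 1) - y k‖ ≤ ‖(y (k + 1) - y k) + t • (η - y (k + 1))‖ := by
    intro k η hη t ht0 ht1
    have h1 := key1 k η hη t ht0 ht1
    have hgap : 0 ≤ ψ (y (k + 1)) - ψstar := by linarith [hmin (y (k + 1))]
    have h3 : c * (1 / (p + 1) * ‖y (k + 1) - y k‖ ^ (p + 1)) ≤
        c * (1 / (p + 1) * ‖y (k + 1) - y k + t • (η - y (k + 1))‖ ^ (p + 1)) := by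
      linarith [h1, mul_nonneg ht0.le hgap]
    have h4 := (mul_le_mul_iff_right₀ hcpos).mp h3
    have h2 := (mul_le_mul_iff_right₀ (by positivity : (0:ℝ) < 1 / (p + 1))).mp h4
    by_contra hlt
    push_neg at hlt
    exact absurd h2 (not_le.mpr (Real.rpow_lt_rpow (norm_nonneg _) hlt hp1pos))
  -- inner product inequality
  have inner_le : ∀ k, ∀ η ∈ Ystar, ⟪y (k + 1) - y k, y (k + 1) - η⟫ ≤ 0 := by
    intro k η hη
    set s := y (k + 1) - y k with hs
    set v := η - y (k + 1) with hv
    have h1 : ∀ n : ℕ, 0 ≤ 2 * ⟪s, v⟫ + (1 / (n + 1)) * ‖v‖ ^ 2 := by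
      intro n
      have htpos : (0:ℝ) < 1 / (n + 1) := by positivity
      have htle : (1 : ℝ) / (n + 1) ≤ 1 := by
        rw [div_le_one (by positivity)]; linarith [Nat.cast_nonneg (α := ℝ) n]
      have h2 := normle k η hη (1 / (n + 1)) htpos htle
      have h3 : ‖s‖ ^ 2 ≤ ‖s + (1 / (n + 1 : ℝ)) • v‖ ^ 2 := by
        have := pow_le_pow_left₀ (norm_nonneg s) h2 2
        exact this
      rw [norm_add_sq_real, norm_smul, real_inner_smul_right] at h3
      rw [Real.norm_of_nonneg htpos.le, mul_pow] at h3
      have h6 : 0 ≤ (1 / (n + 1 : ℝ)) * (2 * ⟪s, v⟫ + (1 / (n + 1)) * ‖v‖ ^ 2) := by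
        nlinarith [h3]
      exact (mul_nonneg_iff_of_pos_left htpos).mp h6
    have h4 : (0:ℝ) ≤ 2 * ⟪s, v⟫ + 0 * ‖v‖ ^ 2 := by
      have htend : Filter.Tendsto (fun n : ℕ => 2 * ⟪s, v⟫ + (1 / (n + 1)) * ‖v‖ ^ 2)
          atTop (𝓝 (2 * ⟪s, v⟫ + 0 * ‖v‖ ^ 2)) := by
        exact tendsto_const_nhds.add
          (tendsto_one_div_add_atTop_nhds_zero_nat.mul_const _)
      exact ge_of_tendsto htend (Filter.Eventually.of_forall h1)
    have h5 : y (k + 1) - η = -v := by rw [hv]; abel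
    rw [h5, inner_neg_right]
    linarith [h4]
  -- Fejér monotonicity
  have fejer : ∀ k, ∀ η ∈ Ystar,
      ‖y (k + 1) - η‖ ≤ ‖y k - η‖ ∧ ‖y (k + 1) - y k‖ ≤ ‖y k - η‖ := by
    intro k η hη
    have hi := inner_le k η hη
    have hsub : (y (k + 1) - η) - (y (k + 1) - y k) = y k - η := by abel
    have hexp : ‖y k - η‖ ^ 2 = ‖y (k + 1) - η‖ ^ 2
        - 2 * ⟪y (k + 1) - η, y (k + 1) - y k⟫ + ‖y (k + 1) - y k‖ ^ 2 := by
      rw [← hsub, norm_sub_sq_real]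
    rw [real_inner_comm] at hexp
    constructor
    · have h1 : ‖y (k + 1) - η‖ ^ 2 ≤ ‖y k - η‖ ^ 2 := by nlinarith [sq_nonneg ‖y (k+1) - y k‖]
      calc ‖y (k + 1) - η‖ = Real.sqrt (‖y (k + 1) - η‖ ^ 2) := (Real.sqrt_sq (norm_nonneg _)).symm
        _ ≤ Real.sqrt (‖y k - η‖ ^ 2) := Real.sqrt_le_sqrt h1
        _ = ‖y k - η‖ := Real.sqrt_sq (norm_nonneg _)
    · have h1 : ‖y (k + 1) - y k‖ ^ 2 ≤ ‖y k - η‖ ^ 2 := by nlinarith [sq_nonneg ‖y (k+1) - η‖]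
      calc ‖y (k + 1) - y k‖ = Real.sqrt (‖y (k + 1) - y k‖ ^ 2) :=
            (Real.sqrt_sq (norm_nonneg _)).symm
        _ ≤ Real.sqrt (‖y k - η‖ ^ 2) := Real.sqrt_le_sqrt h1
        _ = ‖y k - η‖ := Real.sqrt_sq (norm_nonneg _)
  -- step bound and distance monotonicity
  have hstep : ∀ k, ‖y (k + 1) - y k‖ ≤ d k ∧ d (k + 1) ≤ d k := by
    intro k
    obtain ⟨η, hη, hdist⟩ := proj (y k)
    have hf := fejer k η hη
    have heq : d k = ‖y k - η‖ := by
      show Metric.infDist (y k) Ystar = ‖y k - η‖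
      rw [hdist, dist_eq_norm]
    constructor
    · rw [heq]; exact hf.2
    · calc d (k + 1) ≤ dist (y (k + 1)) η := Metric.infDist_le_dist_of_mem hη
        _ = ‖y (k + 1) - η‖ := dist_eq_norm _ _
        _ ≤ ‖y k - η‖ := hf.1
        _ = d k := heq.symm
  have hdanti : Antitone d := antitone_nat_of_succ_le (fun n => (hstep n).2)
  -- gap bound : ψ(y^{k+1}) − ψ⋆ ≤ c ‖s‖^p ‖y^{k+1} − η‖
  have gap_le : ∀ k, ∀ η ∈ Ystar,
      ψ (y (k + 1)) - ψstar ≤ c * ‖y (k + 1) - y k‖ ^ p * ‖η - y (k + 1)‖ := by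
    intro k η hη
    set s := y (k + 1) - y k with hs
    set v := η - y (k + 1) with hv
    have hstep' : ∀ t : ℝ, 0 < t → t ≤ 1 →
        ψ (y (k + 1)) - ψstar ≤ c * (‖s‖ + t * ‖v‖) ^ p * ‖v‖ := by
      intro t ht0 ht1
      have h1 := key1 k η hη t ht0 ht1
      have h2 : ‖s + t • v‖ ≤ ‖s‖ + t * ‖v‖ := by
        calc ‖s + t • v‖ ≤ ‖s‖ + ‖t • v‖ := norm_add_le _ _
          _ = ‖s‖ + t * ‖v‖ := by rw [norm_smul, Real.norm_of_nonneg ht0.le]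
      have h3 : ‖s + t • v‖ ^ (p + 1) ≤ (‖s‖ + t * ‖v‖) ^ (p + 1) :=
        Real.rpow_le_rpow (norm_nonneg _) h2 hp1pos.le
      have h4 : (‖s‖ + t * ‖v‖) ^ (p + 1) - ‖s‖ ^ (p + 1)
          ≤ (p + 1) * (‖s‖ + t * ‖v‖) ^ (p + 1 - 1) * ((‖s‖ + t * ‖v‖) - ‖s‖) :=
        my_rpow_sub_rpow_le (norm_nonneg _) (by nlinarith [norm_nonneg v]) (by linarith)
      rw [show p + 1 - 1 = p by ring, show (‖s‖ + t * ‖v‖) - ‖s‖ = t * ‖v‖ by ring] at h4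
      have hC : (0:ℝ) < c * (1 / (p + 1)) := by positivity
      have h5 : t * (ψ (y (k + 1)) - ψstar)
          ≤ c * (1 / (p + 1)) * ((‖s‖ + t * ‖v‖) ^ (p + 1) - ‖s‖ ^ (p + 1)) := by
        nlinarith [mul_le_mul_of_nonneg_left h3 hC.le]
      have h6 : t * (ψ (y (k + 1)) - ψstar)
          ≤ c * (1 / (p + 1)) * ((p + 1) * (‖s‖ + t * ‖v‖) ^ p * (t * ‖v‖)) :=
        le_trans h5 (mul_le_mul_of_nonneg_left h4 hC.le)
      have h7 : c * (1 / (p + 1)) * ((p + 1) * (‖s‖ + t * ‖v‖) ^ p * (t * ‖v‖))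
          = t * (c * (‖s‖ + t * ‖v‖) ^ p * ‖v‖) := by
        field_simp
      rw [h7] at h6
      exact le_of_mul_le_mul_left h6 ht0
    have hcont : Filter.Tendsto (fun n : ℕ => c * (‖s‖ + (1 / (n + 1)) * ‖v‖) ^ p * ‖v‖)
        atTop (𝓝 (c * (‖s‖ + 0 * ‖v‖) ^ p * ‖v‖)) := by
      have h1 : Filter.Tendsto (fun n : ℕ => ‖s‖ + (1 / (n + 1 : ℝ)) * ‖v‖)
          atTop (𝓝 (‖s‖ + 0 * ‖v‖)) :=
        tendsto_const_nhds.add (tendsto_one_div_add_atTop_nhds_zero_nat.mul_const _)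
      have h2 : ContinuousAt (fun x : ℝ => c * x ^ p * ‖v‖) (‖s‖ + 0 * ‖v‖) := by
        have := Real.continuousAt_rpow_const (‖s‖ + 0 * ‖v‖) p (Or.inr hppos.le)
        exact (continuousAt_const.mul this).mul continuousAt_const
      exact h2.tendsto.comp h1
    have hfor : ∀ n : ℕ, ψ (y (k + 1)) - ψstar
        ≤ c * (‖s‖ + (1 / (n + 1)) * ‖v‖) ^ p * ‖v‖ := by
      intro n
      have htpos : (0:ℝ) < 1 / (n + 1) := by positivity
      have htle : (1 : ℝ) / (n + 1) ≤ 1 := by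
        rw [div_le_one (by positivity)]; linarith [Nat.cast_nonneg (α := ℝ) n]
      exact hstep' _ htpos htle
    have := ge_of_tendsto hcont (Filter.Eventually.of_forall hfor)
    simpa using this
  -- ψ decreases along iterates
  have hdec : ∀ k, ψ (y (k + 1)) + c * ((1 / (p + 1)) * ‖y (k + 1) - y k‖ ^ (p + 1))
      ≤ ψ (y k) := by
    intro k
    have h1 := hupd k (y k)
    rw [sub_self, norm_zero, Real.zero_rpow (by positivity : p + 1 ≠ 0)] at h1
    simpa using h1
  have hψanti : Antitone (fun k => ψ (y k)) := by
    apply antitone_nat_of_succ_le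
    intro n
    have h1 := hdec n
    have h2 : 0 ≤ c * ((1 / (p + 1)) * ‖y (n + 1) - y n‖ ^ (p + 1)) := by positivity
    linarith
  -- existence of K with d K < δ
  have hexK : ∃ K, d K < δ := by
    by_contra hcon
    push_neg at hcon
    -- ψ(y k) converges, steps tend to 0, gap tends to 0
    have hbdd : BddBelow (Set.range fun k => ψ (y k)) :=
      ⟨ψstar, by rintro x ⟨k, rfl⟩; exact hmin _⟩
    have hlim := tendsto_atTop_ciInf hψanti hbdd
    have hlim' : Filter.Tendsto (fun k => ψ (y (k + 1))) atTop (𝓝 (⨅ i, ψ (y i))) :=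
      hlim.comp (Filter.tendsto_add_atTop_nat 1)
    have hdiff : Filter.Tendsto (fun k => ψ (y k) - ψ (y (k + 1))) atTop (𝓝 0) := by
      have := hlim.sub hlim'
      simpa using this
    have hsn : Filter.Tendsto (fun k => ‖y (k + 1) - y k‖ ^ (p + 1)) atTop (𝓝 0) := by
      apply squeeze_zero (fun k => Real.rpow_nonneg (norm_nonneg _) _)
        (g := fun k => ((p + 1) / c) * (ψ (y k) - ψ (y (k + 1))))
      · intro k
        have h1 := hdec k
        have h2 : c * (1 / (p + 1) * ‖y (k + 1) - y k‖ ^ (p + 1))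
            ≤ ψ (y k) - ψ (y (k + 1)) := by linarith
        have h3 := mul_le_mul_of_nonneg_left h2 hp1pos.le
        have e : (p + 1) * (c * (1 / (p + 1) * ‖y (k + 1) - y k‖ ^ (p + 1)))
            = c * ‖y (k + 1) - y k‖ ^ (p + 1) := by field_simp
        rw [e] at h3
        rw [div_mul_eq_mul_div, le_div_iff₀ hcpos]
        linarith
      · simpa using hdiff.const_mul ((p + 1) / c)
    have hs0 : Filter.Tendsto (fun k => ‖y (k + 1) - y k‖) atTop (𝓝 0) := by
      have hcont0 : ContinuousAt (fun x : ℝ => x ^ (1 / (p + 1))) 0 :=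
        Real.continuousAt_rpow_const 0 _ (Or.inr (by positivity))
      have h1 := hcont0.tendsto.comp hsn
      have h2 : ∀ k, (‖y (k + 1) - y k‖ ^ (p + 1)) ^ (1 / (p + 1) : ℝ) = ‖y (k + 1) - y k‖ := by
        intro k
        rw [← Real.rpow_mul (norm_nonneg _), mul_one_div, div_self hp1pos.ne', Real.rpow_one]
      have h3 : (0:ℝ) ^ (1 / (p+1) : ℝ) = 0 := Real.zero_rpow (by positivity)
      rw [h3] at h1
      refine h1.congr (fun k => h2 k)
    have hsp : Filter.Tendsto (fun k => ‖y (k + 1) - y k‖ ^ p) atTop (𝓝 0) := by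
      have hcont0 : ContinuousAt (fun x : ℝ => x ^ p) 0 :=
        Real.continuousAt_rpow_const 0 _ (Or.inr hppos.le)
      have h1 := hcont0.tendsto.comp hs0
      rw [Real.zero_rpow hppos.ne'] at h1
      exact h1
    have hgaplim : Filter.Tendsto (fun k => ψ (y (k + 1)) - ψstar) atTop (𝓝 0) := by
      apply squeeze_zero (fun k => by linarith [hmin (y (k + 1))])
        (g := fun k => c * ‖y (k + 1) - y k‖ ^ p * d 0)
      · intro k
        obtain ⟨η, hη, hdist⟩ := proj (y (k + 1))
        have h1 := gap_le k η hη
        have h2 : ‖η - y (k + 1)‖ = d (k + 1) := by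
          show ‖η - y (k + 1)‖ = Metric.infDist (y (k + 1)) Ystar
          rw [hdist, dist_eq_norm, norm_sub_rev]
        rw [h2] at h1
        have h3 : d (k + 1) ≤ d 0 := hdanti (Nat.zero_le _)
        have h4 : (0:ℝ) ≤ c * ‖y (k + 1) - y k‖ ^ p := by positivity
        nlinarith [hdnn (k + 1)]
      · have := (hsp.const_mul c).mul_const (d 0)
        simpa using this
    -- compact set of "far" points with bounded distance
    set C : Set (EuclideanSpace ℝ (Fin m)) :=
      (fun x => Metric.infDist x Ystar) ⁻¹' (Set.Icc δ (d 0)) with hC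
    have hCclosed : IsClosed C :=
      isClosed_Icc.preimage (Metric.continuous_infDist_pt Ystar)
    have hCsub : C ⊆ Metric.closedBall η₀ (d 0 + Metric.diam Ystar) := by
      intro x hx
      obtain ⟨ηx, hηx, hex⟩ := proj x
      rw [Metric.mem_closedBall]
      calc dist x η₀ ≤ dist x ηx + dist ηx η₀ := dist_triangle _ _ _
        _ ≤ d 0 + Metric.diam Ystar := by
            refine add_le_add ?_ (Metric.dist_le_diam_of_mem hcpt.isBounded hηx hη₀)
            rw [← hex]; exact hx.2
    have hCcpt : IsCompact C :=
      IsCompact.of_isClosed_subset (isCompact_closedBall _ _) hCclosed hCsub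
    have hy0C : y 0 ∈ C := by
      simp only [hC, Set.mem_preimage, Set.mem_Icc]
      exact ⟨hcon 0, le_refl _⟩
    obtain ⟨x0, hx0C, hx0min⟩ := hCcpt.exists_isMinOn ⟨y 0, hy0C⟩ hψcont.continuousOn
    simp only [hC, Set.mem_preimage, Set.mem_Icc] at hx0C
    have hx0not : x0 ∉ Ystar := by
      intro hmem0
      have h1 : Metric.infDist x0 Ystar = 0 := Metric.infDist_zero_of_mem hmem0
      have h2 : δ ≤ Metric.infDist x0 Ystar := hx0C.1
      linarith
    have hgap0 : 0 < ψ x0 - ψstar := by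
      by_contra hcon2
      push_neg at hcon2
      exact hx0not (hmem x0 (by linarith))
    obtain ⟨N, hN⟩ := (Filter.tendsto_atTop'.mp hgaplim) (Set.Iio (ψ x0 - ψstar))
      (Iio_mem_nhds hgap0)
    have hNmem : y (N + 1) ∈ C := by
      simp only [hC, Set.mem_preimage, Set.mem_Icc]
      exact ⟨hcon (N + 1), hdanti (Nat.zero_le _)⟩
    have h6 : ψ x0 ≤ ψ (y (N + 1)) := (isMinOn_iff.mp hx0min) _ hNmem
    have h5 := hN N le_rfl
    simp only [Set.mem_Iio] at h5
    linarith
  obtain ⟨K, hK⟩ := hexK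
  refine ⟨K, fun k hk => ?_⟩
  have hdk1δ : d (k + 1) < δ := lt_of_le_of_lt (hdanti (by omega : K ≤ k + 1)) hK
  have hA : (0:ℝ) < lam * μ ^ (1 / p) := mul_pos hlam (Real.rpow_pos_of_pos hμ _)
  have hbpos : (0:ℝ) < 1 / (lam * μ ^ (1 / p)) := one_div_pos.mpr hA
  rcases eq_or_lt_of_le (hdnn (k + 1)) with h0 | h0
  · have he0 : Metric.infDist (y (k + 1)) Ystar = 0 := h0.symm
    rw [he0]
    exact mul_nonneg (Real.rpow_nonneg hbpos.le _) (Real.rpow_nonneg (hdnn k) _)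
  · have hg := hgrowth (y (k + 1)) hdk1δ
    obtain ⟨η, hη, hdist⟩ := proj (y (k + 1))
    have hgap := gap_le k η hη
    have h2 : ‖η - y (k + 1)‖ = d (k + 1) := by
      show ‖η - y (k + 1)‖ = Metric.infDist (y (k + 1)) Ystar
      rw [hdist, dist_eq_norm, norm_sub_rev]
    rw [h2] at hgap
    have hsd : ‖y (k + 1) - y k‖ ^ p ≤ (d k) ^ p :=
      Real.rpow_le_rpow (norm_nonneg _) (hstep k).1 hppos.le
    have hchain : μ * d (k + 1) ^ ν ≤ c * (d k) ^ p * d (k + 1) := by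
      have h3 : c * ‖y (k + 1) - y k‖ ^ p * d (k + 1) ≤ c * (d k) ^ p * d (k + 1) := by
        apply mul_le_mul_of_nonneg_right _ (hdnn (k + 1))
        exact mul_le_mul_of_nonneg_left hsd hcpos.le
      calc μ * d (k + 1) ^ ν ≤ ψ (y (k + 1)) - ψstar := hg
        _ ≤ c * ‖y (k + 1) - y k‖ ^ p * d (k + 1) := hgap
        _ ≤ c * (d k) ^ p * d (k + 1) := h3
    have hν_split : d (k + 1) ^ ν = d (k + 1) ^ (ν - 1) * d (k + 1) := by
      rw [← Real.rpow_add_one h0.ne' (ν - 1), sub_add_cancel]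
    rw [hν_split] at hchain
    have h1 : μ * d (k + 1) ^ (ν - 1) ≤ c * (d k) ^ p := by
      have h2' : (μ * d (k + 1) ^ (ν - 1)) * d (k + 1) ≤ (c * (d k) ^ p) * d (k + 1) := by
        nlinarith [hchain]
      exact le_of_mul_le_mul_right h2' h0
    have h3 : d (k + 1) ^ (ν - 1) ≤ (c * (d k) ^ p) / μ := (le_div_iff₀' hμ).mpr h1
    have h4 : d (k + 1) ≤ ((c * (d k) ^ p) / μ) ^ (1 / (ν - 1) : ℝ) := by
      have h5 := Real.rpow_le_rpow (Real.rpow_nonneg (hdnn (k + 1)) _) h3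
        (by positivity : (0:ℝ) ≤ 1 / (ν - 1))
      rwa [← Real.rpow_mul (hdnn (k + 1)), mul_one_div, div_self hν1.ne',
        Real.rpow_one] at h5
    have hμp : (0:ℝ) < μ ^ (1 / p) := Real.rpow_pos_of_pos hμ _
    have e1 : (1 / (lam * μ ^ (1 / p))) ^ p = c / μ := by
      have h1' : ((lam * μ ^ (1 / p)) ^ p : ℝ) = lam ^ p * μ := by
        rw [Real.mul_rpow hlam.le hμp.le, ← Real.rpow_mul hμ.le, one_div,
          inv_mul_cancel₀ hppos.ne', Real.rpow_one]
      rw [one_div, Real.inv_rpow hA.le, h1', hc, Real.rpow_neg hlam.le, mul_inv,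
        div_eq_mul_inv]
    have hconst : ((c * (d k) ^ p) / μ) ^ (1 / (ν - 1) : ℝ)
        = (1 / (lam * μ ^ (1 / p))) ^ (p / (ν - 1)) * (d k) ^ (p / (ν - 1)) := by
      rw [show p / (ν - 1) = p * (1 / (ν - 1)) by rw [mul_one_div],
        Real.rpow_mul hbpos.le, Real.rpow_mul (hdnn k), e1,
        ← Real.mul_rpow (div_nonneg hcpos.le hμ.le) (Real.rpow_nonneg (hdnn k) _),
        show c / μ * (d k) ^ p = (c * (d k) ^ p) / μ by ring]
    rw [hconst] at h4
    exact h4
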